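/- For each p ∈ X^#, the function d_p^#(s,q) = inf{r ≥ 0 : B(S,r) ∈ q for every S ∈ s} defines a semi-metric on p̆ = {q ∈ X^# : q ∥ p}: it is symmetric and satisfies the triangle inequality. -/
import Mathlib


open Metric Bornology Set

variable {X : Type*} [MetricSpace X]

/-- `B(A,r) = ⋃_{a∈A} B(a,r)` where `B(a,r)` is the closed ball of radius `r`. -/
def ballU (A : Set X) (r : ℝ) : Set X := ⋃ a ∈ A, Metric.closedBall a r

/-- `X^#`: the set of ultrafilters on `X` all of whose members are unbounded. -/
def sharp (X : Type*) [MetricSpace X] : Set (Ultrafilter X) :=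
  {p | ∀ P ∈ p, ¬ Bornology.IsBounded P}

/-- Parallelity: `p ∥ q` iff there is `r ≥ 0` with `B(Q,r) ∈ p` for every `Q ∈ q`. -/
def Par (p q : Ultrafilter X) : Prop :=
  ∃ r : ℝ, 0 ≤ r ∧ ∀ Q ∈ q, ballU Q r ∈ p

/-- `p̆ = {q ∈ X^# : q ∥ p}`. -/
def pbreve (p : Ultrafilter X) : Set (Ultrafilter X) :=
  {q | q ∈ sharp X ∧ Par q p}

/-- The `p`-companion `Δ_p(Y) = {q ∈ X^# : Y ∈ q, q ∥ p}`. -/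
def Delta (p : Ultrafilter X) (Y : Set X) : Set (Ultrafilter X) :=
  {q | q ∈ sharp X ∧ Y ∈ q ∧ Par q p}

/-- A set `S ⊆ X^#` is invariant if `p ∈ S`, `q ∈ X^#`, `q ∥ p` imply `q ∈ S`. -/
def Invt (S : Set (Ultrafilter X)) : Prop :=
  ∀ p ∈ S, ∀ q, q ∈ sharp X → Par q p → q ∈ S

/-- `Y` is large if `X = B(Y,r)` for some `r ≥ 0`. -/
def Large (Y : Set X) : Prop := ∃ r : ℝ, 0 ≤ r ∧ ballU Y r = Set.univ

/-- `Y` is thick if for every `r ≥ 0` there is `y ∈ Y` with `B(y,r) ⊆ Y`. -/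
def Thick (Y : Set X) : Prop := ∀ r : ℝ, 0 ≤ r → ∃ y ∈ Y, Metric.closedBall y r ⊆ Y

/-- `Y` is prethick if `B(Y,r)` is thick for some `r ≥ 0`. -/
def Prethick (Y : Set X) : Prop := ∃ r : ℝ, 0 ≤ r ∧ Thick (ballU Y r)

/-- `Y` is small if `(X∖Y) ∩ L` is large for every large `L`. -/
def SmallSet (Y : Set X) : Prop := ∀ L : Set X, Large L → Large (Yᶜ ∩ L)

/-- `Y` is thin if for each `r ≥ 0` there is a bounded `V` with
`B(y,r) ∩ Y = {y}` for all `y ∈ Y∖V`. -/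
def Thin (Y : Set X) : Prop :=
  ∀ r : ℝ, 0 ≤ r → ∃ V : Set X, Bornology.IsBounded V ∧
    ∀ y ∈ Y \ V, Metric.closedBall y r ∩ Y = {y}

/-- `Y` is `n`-thin if for each `r ≥ 0` there is a bounded `V` with
`|B(y,r) ∩ Y| ≤ n` for all `y ∈ Y∖V`. -/
def NThin (n : ℕ) (Y : Set X) : Prop :=
  ∀ r : ℝ, 0 ≤ r → ∃ V : Set X, Bornology.IsBounded V ∧
    ∀ y ∈ Y \ V, (Metric.closedBall y r ∩ Y).encard ≤ n

/-- `M` is a minimal nonempty closed invariant subset of `X^#`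
(closures/closedness taken in the Stone topology on ultrafilters). -/
def MinCI (M : Set (Ultrafilter X)) : Prop :=
  M ⊆ sharp X ∧ M.Nonempty ∧ IsClosed M ∧ Invt M ∧
    ∀ S ⊆ M, S.Nonempty → IsClosed S → Invt S → S = M

/-- The semi-metric `d_p^#(s,q) = inf {r ≥ 0 : B(S,r) ∈ q for every S ∈ s}`. -/
noncomputable def dSharp (s q : Ultrafilter X) : ℝ :=
  sInf {r : ℝ | 0 ≤ r ∧ ∀ S ∈ s, ballU S r ∈ q}

lemma mem_ballU' {A : Set X} {r : ℝ} {x : X} : x ∈ ballU A r ↔ ∃ a ∈ A, dist x a ≤ r := by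
  simp [ballU, Metric.mem_closedBall]

lemma ballU_mono' {A : Set X} {r r' : ℝ} (h : r ≤ r') : ballU A r ⊆ ballU A r' := fun x hx => by
  rcases mem_ballU'.1 hx with ⟨a, ha, hd⟩
  exact mem_ballU'.2 ⟨a, ha, hd.trans h⟩

lemma ballU_ballU' {A : Set X} {a b : ℝ} : ballU (ballU A a) b ⊆ ballU A (a + b) := fun x hx => by
  rcases mem_ballU'.1 hx with ⟨y, hy, hxy⟩
  rcases mem_ballU'.1 hy with ⟨z, hz, hyz⟩
  exact mem_ballU'.2 ⟨z, hz, (dist_triangle x y z).trans (by linarith)⟩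

lemma swap_ball {s q : Ultrafilter X} {r : ℝ}
    (h : ∀ S ∈ s, ballU S r ∈ q) : ∀ Q ∈ q, ballU Q r ∈ s := by
  intro Q hQ
  by_contra hc
  have hcompl : (ballU Q r)ᶜ ∈ s := Ultrafilter.compl_mem_iff_notMem.2 hc
  have h2 : ballU ((ballU Q r)ᶜ) r ∈ q := h _ hcompl
  obtain ⟨x, hx1, hx2⟩ := Filter.nonempty_of_mem (Filter.inter_mem hQ h2)
  rcases mem_ballU'.1 hx2 with ⟨c, hc1, hc2⟩
  exact hc1 (mem_ballU'.2 ⟨x, hx1, by rwa [dist_comm]⟩)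

lemma dset_nonempty {p s q : Ultrafilter X} (hs : s ∈ pbreve p) (hq : q ∈ pbreve p) :
    {r : ℝ | 0 ≤ r ∧ ∀ S ∈ s, ballU S r ∈ q}.Nonempty := by
  obtain ⟨rs, hrs0, hrs⟩ := hs.2
  obtain ⟨rq, hrq0, hrq⟩ := hq.2
  refine ⟨rs + rq, by linarith, fun S hS => ?_⟩
  have hSp : ballU S rs ∈ p := swap_ball hrs S hS
  have : ballU (ballU S rs) rq ∈ q := hrq _ hSp
  exact Filter.mem_of_superset this ballU_ballU'

lemma dset_symm {s q : Ultrafilter X} :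
    {r : ℝ | 0 ≤ r ∧ ∀ S ∈ s, ballU S r ∈ q} = {r : ℝ | 0 ≤ r ∧ ∀ Q ∈ q, ballU Q r ∈ s} := by
  ext r
  exact ⟨fun ⟨h0, h⟩ => ⟨h0, swap_ball h⟩, fun ⟨h0, h⟩ => ⟨h0, swap_ball h⟩⟩

theorem stmt17 (hX : ¬ Bornology.IsBounded (Set.univ : Set X))
    (p : Ultrafilter X) (hp : p ∈ sharp X) :
    (∀ s ∈ pbreve p, ∀ q ∈ pbreve p, dSharp s q = dSharp q s) ∧
    (∀ s ∈ pbreve p, ∀ q ∈ pbreve p, ∀ t ∈ pbreve p,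
      dSharp s t ≤ dSharp s q + dSharp q t) ∧
    (∀ s ∈ pbreve p, ∀ q ∈ pbreve p, 0 ≤ dSharp s q) := by
  have hnonneg : ∀ s q : Ultrafilter X, 0 ≤ dSharp s q := fun s q =>
    Real.sInf_nonneg (fun r hr => hr.1)
  refine ⟨fun s _ q _ => by rw [dSharp, dSharp, dset_symm], ?_, fun s _ q _ => hnonneg s q⟩
  intro s hs q hq t ht
  have hbdd : ∀ s q : Ultrafilter X, BddBelow {r : ℝ | 0 ≤ r ∧ ∀ S ∈ s, ballU S r ∈ q} :=
    fun s q => ⟨0, fun r hr => hr.1⟩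
  have key : ∀ a ∈ {r : ℝ | 0 ≤ r ∧ ∀ S ∈ s, ballU S r ∈ q},
      ∀ b ∈ {r : ℝ | 0 ≤ r ∧ ∀ S ∈ q, ballU S r ∈ t}, dSharp s t ≤ a + b := by
    rintro a ⟨ha0, ha⟩ b ⟨hb0, hb⟩
    refine csInf_le (hbdd s t) ⟨by linarith, fun S hS => ?_⟩
    exact Filter.mem_of_superset (hb _ (ha S hS)) ballU_ballU'
  have h1 : dSharp s t - dSharp q t ≤ dSharp s q := by
    refine le_csInf (dset_nonempty hs hq) (fun a ha => ?_)
    rw [sub_le_iff_le_add, add_comm]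
    calc dSharp s t ≤ a + sInf {r : ℝ | 0 ≤ r ∧ ∀ S ∈ q, ballU S r ∈ t} := by
          rw [← sub_le_iff_le_add']
          exact le_csInf (dset_nonempty hq ht) (fun b hb => by
            rw [sub_le_iff_le_add']; exact key a ha b hb)
      _ = dSharp q t + a := add_comm _ _
  linarith
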